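/- Let M be a finitely generated ℕ^r-graded module over S = K[x_1,…,x_r] and let P ∈ ℤ[t_1,…,t_r] be a polynomial such that ∏_{i=1}^r (1−t_i) · HS(M,t) = P(t_1,…,t_r) as formal power series. Then rk_S(M) = P(1,1,…,1). -/

import Mathlib

/-- The rank of a module `M` over an integral domain `R`:
`rk_R(M) = dim_Q (M ⊗_R Q)` where `Q` is the fraction field of `R`. -/
noncomputable def rk (R : Type) [CommRing R] (M : Type) [AddCommGroup M] [Module R M] : ℕ :=
  Module.finrank (FractionRing R) (TensorProduct R (FractionRing R) M)

/-!
STATEMENT 4: Let `M` be a finitely generated ℕ^r-graded module over `S = K[x_1,…,x_r]`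
and let `P ∈ ℤ[t_1,…,t_r]` be a polynomial with
`∏_{i=1}^r (1 − t_i) · HS(M,t) = P(t_1,…,t_r)` as formal power series.
Then `rk_S(M) = P(1,…,1)`.
-/

open MvPowerSeries Finset in
section


noncomputable def allOnes (r : ℕ) : MvPowerSeries (Fin r) ℤ := fun _ => 1

noncomputable def ES (r : ℕ) (s : Finset (Fin r)) : MvPowerSeries (Fin r) ℤ :=
  fun u => if ∀ i ∈ s, u i = 0 then 1 else 0

lemma coeff_allOnes (r : ℕ) (u : Fin r →₀ ℕ) : MvPowerSeries.coeff u (allOnes r) = 1 :=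
  rfl

lemma coeff_ES (r : ℕ) (s : Finset (Fin r)) (u : Fin r →₀ ℕ) :
    MvPowerSeries.coeff u (ES r s) = if ∀ i ∈ s, u i = 0 then 1 else 0 :=
  rfl

lemma prod_one_sub_X_mul_allOnes (r : ℕ) (s : Finset (Fin r)) :
    (∏ i ∈ s, (1 - MvPowerSeries.X (R := ℤ) i)) * allOnes r = ES r s := by
  classical
  induction s using Finset.induction with
  | empty =>
      ext u
      simp [coeff_allOnes, coeff_ES]
  | insert i s hi ih =>
      rw [Finset.prod_insert hi, mul_assoc, ih]
      ext u
      rw [sub_mul, one_mul, map_sub, coeff_ES]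
      rw [MvPowerSeries.X, coeff_monomial_mul]
      have hval : ∀ j ∈ s, (u - Finsupp.single i 1 : Fin r →₀ ℕ) j = u j := by
        intro j hj
        have hij : i ≠ j := fun e => hi (e ▸ hj)
        rw [Finsupp.tsub_apply, Finsupp.single_apply, if_neg hij, Nat.sub_zero]
      by_cases h0 : u i = 0
      · have hle : ¬ Finsupp.single i 1 ≤ u := by
          simp [Finsupp.single_le_iff, h0]
        rw [if_neg hle, sub_zero, coeff_ES]
        congr 1
        simp only [Finset.forall_mem_insert, eq_iff_iff]
        exact ⟨fun h => ⟨h0, h⟩, And.right⟩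
      · have hle : Finsupp.single i 1 ≤ u := by
          simp [Finsupp.single_le_iff, Nat.one_le_iff_ne_zero, h0]
        rw [if_pos hle, one_mul, coeff_ES, coeff_ES]
        have hcond : ¬ (∀ j ∈ insert i s, u j = 0) := by
          intro h; exact h0 (h i (Finset.mem_insert_self i s))
        rw [if_neg hcond]
        by_cases hc : ∀ j ∈ s, u j = 0
        · rw [if_pos hc, if_pos (fun j hj => (hval j hj).trans (hc j hj)), sub_self]
        · rw [if_neg hc, if_neg (fun h => hc fun j hj => (hval j hj).symm.trans (h j hj)), sub_self]

lemma prod_one_sub_X_mul_allOnes_univ (r : ℕ) :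
    (∏ i : Fin r, (1 - MvPowerSeries.X (R := ℤ) i)) * allOnes r = 1 := by
  rw [prod_one_sub_X_mul_allOnes r Finset.univ]
  ext u
  rw [coeff_ES, MvPowerSeries.coeff_one]
  congr 1
  simp only [Finset.mem_univ, true_implies, eq_iff_iff]
  exact ⟨fun h => Finsupp.ext h, fun h i => by simp [h]⟩

lemma coeff_HS_eq_eval_one (r : ℕ) (HS : MvPowerSeries (Fin r) ℤ)
    (P : MvPolynomial (Fin r) ℤ)
    (hP : (∏ i : Fin r, (1 - MvPowerSeries.X i)) * HS = ↑P)
    (N : Fin r →₀ ℕ) (hN : ∀ u ∈ P.support, u ≤ N) :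
    MvPowerSeries.coeff N HS = MvPolynomial.eval (fun _ => (1 : ℤ)) P := by
  classical
  have h1 : HS = (P : MvPowerSeries (Fin r) ℤ) * allOnes r := by
    calc HS = ((∏ i : Fin r, (1 - MvPowerSeries.X i)) * allOnes r) * HS := by
            rw [prod_one_sub_X_mul_allOnes_univ, one_mul]
      _ = ((∏ i : Fin r, (1 - MvPowerSeries.X i)) * HS) * allOnes r := by ring
      _ = (P : MvPowerSeries (Fin r) ℤ) * allOnes r := by rw [hP]
  rw [h1, MvPowerSeries.coeff_mul]
  have h2 : ∀ p ∈ Finset.HasAntidiagonal.antidiagonal N,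
      (MvPowerSeries.coeff p.1 (P : MvPowerSeries (Fin r) ℤ)) *
        (MvPowerSeries.coeff p.2 (allOnes r)) = MvPolynomial.coeff p.1 P := by
    intro p _
    rw [coeff_allOnes, mul_one, MvPolynomial.coeff_coe]
  rw [Finset.sum_congr rfl h2]
  have hinj : ∀ p ∈ Finset.HasAntidiagonal.antidiagonal N, ∀ q ∈ Finset.HasAntidiagonal.antidiagonal N,
      p.1 = q.1 → p = q := by
    intro p hp q hq hpq
    rw [Finset.HasAntidiagonal.mem_antidiagonal] at hp hq
    have : p.2 = q.2 := by
      apply add_left_cancel (a := p.1)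
      rw [hp, hpq, hq]
    exact Prod.ext hpq this
  rw [← Finset.sum_image (f := fun u => MvPolynomial.coeff u P) (g := Prod.fst) hinj]
  have hsub : P.support ⊆ (Finset.HasAntidiagonal.antidiagonal N).image Prod.fst := by
    intro u hu
    apply Finset.mem_image.mpr
    exact ⟨(u, N - u), Finset.HasAntidiagonal.mem_antidiagonal.mpr (add_tsub_cancel_of_le (hN u hu)), rfl⟩
  rw [← Finset.sum_subset hsub (fun u _ hu => MvPolynomial.notMem_support_iff.mp hu)]
  rw [MvPolynomial.eval_eq]
  simp

set_option maxHeartbeats 1000000 in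
lemma finrank_component_eq_rk (K : Type) [Field K] (r : ℕ)
    (M : Type) [AddCommGroup M] [Module (MvPolynomial (Fin r) K) M]
    [Module K M] [IsScalarTower K (MvPolynomial (Fin r) K) M]
    [Module.Finite (MvPolynomial (Fin r) K) M]
    (ℳ : (Fin r →₀ ℕ) → Submodule K M)
    (hM : DirectSum.IsInternal ℳ)
    (hMgr : ∀ (u v : Fin r →₀ ℕ) (c : K) (m : M), m ∈ ℳ v →
      (MvPolynomial.monomial u c) • m ∈ ℳ (u + v)) :
    ∃ N₀ : Fin r →₀ ℕ, ∀ N : Fin r →₀ ℕ, N₀ ≤ N →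
      Module.finrank K (ℳ N) = rk (MvPolynomial (Fin r) K) M := by
  classical
  set S := MvPolynomial (Fin r) K
  set Q := FractionRing S
  letI : DirectSum.Decomposition ℳ := hM.chooseDecomposition
  -- the K-linear projection onto the degree-u component
  set projL : (Fin r →₀ ℕ) → M →ₗ[K] M := fun u =>
    (ℳ u).subtype ∘ₗ (DirectSum.component K (Fin r →₀ ℕ) (fun v => ℳ v) u) ∘ₗ
      (DirectSum.decomposeLinearEquiv ℳ).toLinearMap with hprojL
  have hproj_apply : ∀ (u : Fin r →₀ ℕ) (z : M), projL u z = (DirectSum.decompose ℳ z u : M) := by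
    intro u z; rfl
  have hproj_same : ∀ (u : Fin r →₀ ℕ) (z : M), z ∈ ℳ u → projL u z = z := by
    intro u z hz; rw [hproj_apply]; exact DirectSum.decompose_of_mem_same ℳ hz
  have hproj_ne : ∀ (u v : Fin r →₀ ℕ) (z : M), z ∈ ℳ v → v ≠ u → projL u z = 0 := by
    intro u v z hz hne; rw [hproj_apply]
    rw [DirectSum.decompose_of_mem_ne ℳ hz hne]
  -- key computation: projection of `h • g` for homogeneous `g`
  have key : ∀ (h : S) (w : Fin r →₀ ℕ) (g : M), g ∈ ℳ w → ∀ u : Fin r →₀ ℕ,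
      projL u (h • g) ∈ Submodule.span K
        {y : M | ∃ v : Fin r →₀ ℕ, v + w = u ∧ y = (MvPolynomial.monomial v (1 : K)) • g} := by
    intro h w g hg u
    rw [← MvPolynomial.support_sum_monomial_coeff h, Finset.sum_smul, map_sum]
    apply Submodule.sum_mem
    intro v hv
    by_cases hvu : v + w = u
    · rw [hproj_same u _ (hvu ▸ hMgr v w (MvPolynomial.coeff v h) g hg)]
      have : (MvPolynomial.monomial v (MvPolynomial.coeff v h)) • g
          = (MvPolynomial.coeff v h) • ((MvPolynomial.monomial v (1 : K)) • g) := by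
        rw [← smul_assoc, MvPolynomial.smul_monomial, smul_eq_mul, mul_one]
      rw [this]
      exact Submodule.smul_mem _ _ (Submodule.subset_span ⟨v, hvu, rfl⟩)
    · rw [hproj_ne u (v + w) _ (hMgr v w (MvPolynomial.coeff v h) g hg) hvu]
      exact Submodule.zero_mem _
  have key2 : ∀ (h : S) (w : Fin r →₀ ℕ) (g : M), g ∈ ℳ w → ∀ v : Fin r →₀ ℕ,
      projL (v + w) (h • g) = (MvPolynomial.monomial v (MvPolynomial.coeff v h)) • g := by
    intro h w g hg v
    conv_lhs => rw [← MvPolynomial.support_sum_monomial_coeff h]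
    rw [Finset.sum_smul, map_sum]
    rw [Finset.sum_eq_single v
      (fun v' _ hne => hproj_ne _ (v' + w) _ (hMgr v' w _ g hg) (fun e => hne (add_right_cancel e)))
      (fun hv => by
        rw [MvPolynomial.notMem_support_iff.mp hv, MvPolynomial.monomial_zero, zero_smul,
          map_zero])]
    exact hproj_same _ _ (hMgr v w _ g hg)
  -- projections of spans of homogeneous families
  have spanBound : ∀ (ι' : Type) (_ : Fintype ι') (g : ι' → M) (b : ι' → (Fin r →₀ ℕ)),
      (∀ j, g j ∈ ℳ (b j)) → ∀ (z : M), z ∈ Submodule.span S (Set.range g) →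
      ∀ u : Fin r →₀ ℕ, projL u z ∈ Submodule.span K
        {y : M | ∃ (j : ι') (v : Fin r →₀ ℕ), v + b j = u ∧
          y = (MvPolynomial.monomial v (1 : K)) • g j} := by
    intro ι' _ g b hgb z hz u
    obtain ⟨c, rfl⟩ := (Submodule.mem_span_range_iff_exists_fun S).mp hz
    rw [map_sum]
    apply Submodule.sum_mem
    intro j _
    refine Submodule.span_mono ?_ (key (c j) (b j) (g j) (hgb j) u)
    rintro y ⟨v, hv, rfl⟩
    exact ⟨j, v, hv, rfl⟩
  -- homogeneous elements span M over S
  have hhomog : Submodule.span S {z : M | ∃ u, z ∈ ℳ u} = ⊤ := by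
    rw [Submodule.eq_top_iff']
    intro z
    rw [← DirectSum.sum_support_decompose ℳ z]
    exact Submodule.sum_mem _ fun u _ =>
      Submodule.subset_span ⟨u, ((DirectSum.decompose ℳ z) u).2⟩
  -- the canonical map into the localized module
  set φ : M →ₗ[S] TensorProduct S Q M := TensorProduct.mk S Q M 1 with hφdef
  haveI : IsLocalizedModule (nonZeroDivisors S) φ :=
    (isLocalizedModule_iff_isBaseChange (nonZeroDivisors S) Q φ).mpr
      (TensorProduct.isBaseChange S M Q)
  have hφsmul : ∀ (s : S) (z : M), φ (s • z) = (algebraMap S Q s) • φ z := by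
    intro s z
    rw [map_smul, algebraMap_smul]
  -- the image of M spans the tensor product over Q
  have hφspan : ∀ y : TensorProduct S Q M, y ∈ Submodule.span Q (φ '' {z : M | ∃ u, z ∈ ℳ u}) := by
    have hall : ∀ z : M, φ z ∈ Submodule.span Q (φ '' {z : M | ∃ u, z ∈ ℳ u}) := by
      intro z
      have : Submodule.span S {z : M | ∃ u, z ∈ ℳ u} ≤ Submodule.comap φ
          ((Submodule.span Q (φ '' {z : M | ∃ u, z ∈ ℳ u})).restrictScalars S) := by
        rw [Submodule.span_le]
        intro x hx
        exact Submodule.subset_span (Set.mem_image_of_mem _ hx)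
      exact this (hhomog ▸ Submodule.mem_top)
    intro y
    induction y using TensorProduct.induction_on with
    | zero => exact Submodule.zero_mem _
    | tmul q z =>
        have : q ⊗ₜ[S] z = q • φ z := by
          rw [hφdef]
          simp [TensorProduct.mk_apply, TensorProduct.smul_tmul', smul_eq_mul, mul_one]
        rw [this]
        exact Submodule.smul_mem _ _ (hall z)
    | add y₁ y₂ h₁ h₂ => exact Submodule.add_mem _ h₁ h₂
  -- extract a basis from the homogeneous spanning set
  obtain ⟨bs, hbsub, hbspan, hbind⟩ :=
    exists_linearIndependent Q (φ '' {z : M | ∃ u, z ∈ ℳ u})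
  have hbspantop : Submodule.span Q bs = ⊤ := by
    rw [hbspan, Submodule.eq_top_iff']
    exact hφspan
  haveI : Module.Finite Q (TensorProduct S Q M) := Module.Finite.base_change S Q M
  have hbsfin : bs.Finite := hbind.setFinite
  haveI : Fintype bs := hbsfin.fintype
  -- the basis
  have B : Module.Basis bs Q (TensorProduct S Q M) :=
    Module.Basis.mk hbind (by rw [Subtype.range_coe, hbspantop])
  have hcard : rk S M = Fintype.card bs := by
    unfold rk
    exact Module.finrank_eq_card_basis B
  -- choose homogeneous preimages of the basis vectors
  have hchoice : ∀ i : bs, ∃ (z : M) (u : Fin r →₀ ℕ), z ∈ ℳ u ∧ φ z = (i : TensorProduct S Q M) := by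
    intro i
    obtain ⟨z, hz, hφz⟩ := hbsub i.2
    obtain ⟨u, hu⟩ := hz
    exact ⟨z, u, hu, hφz⟩
  choose m a ham hφm using hchoice
  set F : Submodule S M := Submodule.span S (Set.range m) with hFdef
  -- a finite homogeneous generating family for M over S
  obtain ⟨T, hT⟩ : (⊤ : Submodule S M).FG := Module.Finite.fg_top
  set ι₂ : Type := (y : T) × ((DirectSum.decompose ℳ (y : M)).support) with hι₂def
  set g : ι₂ → M := fun p => projL p.2 (p.1 : M) with hgdef
  set b : ι₂ → (Fin r →₀ ℕ) := fun p => (p.2 : Fin r →₀ ℕ) with hbdef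
  have hgb : ∀ j : ι₂, g j ∈ ℳ (b j) := by
    intro j
    show projL (j.2 : Fin r →₀ ℕ) (j.1 : M) ∈ ℳ (b j)
    rw [hproj_apply]
    exact ((DirectSum.decompose ℳ (j.1 : M)) (j.2 : Fin r →₀ ℕ)).2
  have hgspan : Submodule.span S (Set.range g) = ⊤ := by
    rw [Submodule.eq_top_iff']
    intro z
    have hz : z ∈ Submodule.span S (T : Set M) := by rw [hT]; exact Submodule.mem_top
    refine Submodule.span_le.mpr ?_ hz
    intro y hy
    rw [← DirectSum.sum_support_decompose ℳ y]
    rw [← Finset.sum_attach ((DirectSum.decompose ℳ y).support)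
      (fun u => ((DirectSum.decompose ℳ y) u : M))]
    apply Submodule.sum_mem
    intro u _
    apply Submodule.subset_span
    exact ⟨⟨⟨y, hy⟩, u⟩, hproj_apply _ _⟩
  -- each homogeneous generator is, after multiplication by a nonzero element, in F
  have hσj : ∀ j : ι₂, ∃ σ : S, σ ≠ 0 ∧ σ • g j ∈ F := by
    intro j
    have h1 : φ (g j) ∈ Submodule.span Q (Set.range (Subtype.val : bs → TensorProduct S Q M)) := by
      rw [Subtype.range_coe, hbspantop]; exact Submodule.mem_top
    obtain ⟨c, hc⟩ := (Submodule.mem_span_range_iff_exists_fun Q).mp h1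
    obtain ⟨d, hd⟩ := IsLocalization.exist_integer_multiples_of_finite
      (nonZeroDivisors S) c
    choose f hf using hd
    have h2 : φ ((d : S) • g j) = φ (∑ i : bs, f i • m i) := by
      rw [hφsmul, ← hc, Finset.smul_sum, map_sum]
      apply Finset.sum_congr rfl
      intro i _
      rw [hφsmul, hφm, smul_smul, hf i, Algebra.smul_def]
    obtain ⟨t, ht⟩ := IsLocalizedModule.exists_of_eq (S := nonZeroDivisors S) (f := φ) h2
    refine ⟨(t : S) * (d : S), ?_, ?_⟩
    · exact mul_ne_zero (nonZeroDivisors.ne_zero t.2) (nonZeroDivisors.ne_zero d.2)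
    · have ht' : (t : S) • ((d : S) • g j) = (t : S) • ∑ i : bs, f i • m i := ht
      rw [mul_smul, ht']
      exact Submodule.smul_mem F _ (Submodule.sum_mem F fun i _ =>
        Submodule.smul_mem F _ (Submodule.subset_span (Set.mem_range_self i)))
  choose σf hσf0 hσfF using hσj
  -- combine into a single nonzero annihilator-ish element
  set σ : S := ∏ j : ι₂, σf j with hσdef
  have hσ0 : σ ≠ 0 := Finset.prod_ne_zero_iff.mpr fun j _ => hσf0 j
  have hσF : ∀ j : ι₂, σ • g j ∈ F := by
    intro j
    rw [hσdef, ← Finset.prod_erase_mul Finset.univ σf (Finset.mem_univ j), mul_smul]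
    exact Submodule.smul_mem F _ (hσfF j)
  -- pick a monomial from the support of σ
  obtain ⟨v₀, hv₀⟩ : σ.support.Nonempty :=
    Finset.nonempty_iff_ne_empty.mpr (fun h => hσ0 (MvPolynomial.support_eq_empty.mp h))
  have hσv₀ : MvPolynomial.coeff v₀ σ ≠ 0 := MvPolynomial.mem_support_iff.mp hv₀
  -- F is stable under projections
  have hFproj : ∀ z ∈ F, ∀ u : Fin r →₀ ℕ, projL u z ∈ F := by
    intro z hz u
    have h1 := spanBound bs inferInstance m a ham z (hFdef ▸ hz) u
    have h2 : {y : M | ∃ (i : bs) (v : Fin r →₀ ℕ), v + a i = u ∧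
        y = (MvPolynomial.monomial v (1 : K)) • m i} ⊆ (F : Set M) := by
      rintro y ⟨i, v, hv, rfl⟩
      exact Submodule.smul_mem F _ (Submodule.subset_span (Set.mem_range_self i))
    exact (Submodule.span_le (p := F.restrictScalars K)).mpr h2 h1
  -- F is stable under scalar multiplication by K
  have hFk : ∀ (c : K) (y : M), y ∈ F → c • y ∈ F := by
    intro c y hy
    rw [← algebraMap_smul S c y]
    exact Submodule.smul_mem F _ hy
  -- the monomial x^{v₀} sends every homogeneous generator into F
  have hv0F : ∀ j : ι₂, (MvPolynomial.monomial v₀ (1 : K)) • g j ∈ F := by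
    intro j
    have h1 : projL (v₀ + b j) (σ • g j)
        = (MvPolynomial.monomial v₀ (MvPolynomial.coeff v₀ σ)) • g j :=
      key2 σ (b j) (g j) (hgb j) v₀
    have h2 : (MvPolynomial.monomial v₀ (MvPolynomial.coeff v₀ σ)) • g j ∈ F := by
      rw [← h1]; exact hFproj _ (hσF j) _
    have h3 : (MvPolynomial.monomial v₀ (1 : K)) • g j
        = (MvPolynomial.coeff v₀ σ)⁻¹ • ((MvPolynomial.monomial v₀ (MvPolynomial.coeff v₀ σ)) • g j) := by
      rw [← smul_assoc, MvPolynomial.smul_monomial, smul_eq_mul, inv_mul_cancel₀ hσv₀]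
    rw [h3]
    exact hFk _ _ h2
  -- the degree bound
  refine ⟨v₀ + (∑ j : ι₂, b j) + (∑ i : bs, a i), ?_⟩
  intro N hN
  have hbjN : ∀ j : ι₂, v₀ + b j ≤ N := by
    intro j
    refine le_trans ?_ hN
    have : b j ≤ ∑ j' : ι₂, b j' := Finset.single_le_sum (f := b) (fun _ _ => zero_le) (Finset.mem_univ j)
    calc v₀ + b j ≤ v₀ + ∑ j' : ι₂, b j' := add_le_add_right this v₀
      _ ≤ v₀ + (∑ j' : ι₂, b j') + (∑ i : bs, a i) := le_add_of_nonneg_right zero_le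
  have haiN : ∀ i : bs, a i ≤ N := by
    intro i
    refine le_trans ?_ hN
    have : a i ≤ ∑ i' : bs, a i' := Finset.single_le_sum (f := a) (fun _ _ => zero_le) (Finset.mem_univ i)
    exact le_add_of_nonneg_left zero_le |>.trans (add_le_add_right this _) |>.trans_eq rfl
  -- every element of ℳ N lies in F
  have hMF : ∀ z : M, z ∈ ℳ N → z ∈ F := by
    intro z hz
    have h1 : z ∈ Submodule.span S (Set.range g) := by rw [hgspan]; exact Submodule.mem_top
    have h2 := spanBound ι₂ inferInstance g b hgb z h1 N
    rw [hproj_same N z hz] at h2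
    have h3 : {y : M | ∃ (j : ι₂) (v : Fin r →₀ ℕ), v + b j = N ∧
        y = (MvPolynomial.monomial v (1 : K)) • g j} ⊆ (F : Set M) := by
      rintro y ⟨j, v, hv, rfl⟩
      have hv₀v : v₀ ≤ v := by
        intro x
        have := (hbjN j).trans_eq hv.symm
        have hx := this x
        simp only [Finsupp.coe_add, Pi.add_apply] at hx
        omega
      have : MvPolynomial.monomial v (1 : K)
          = MvPolynomial.monomial (v - v₀) (1 : K) * MvPolynomial.monomial v₀ (1 : K) := by
        rw [MvPolynomial.monomial_mul, tsub_add_cancel_of_le hv₀v, one_mul]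
      rw [this, mul_smul]
      exact Submodule.smul_mem F _ (hv0F j)
    exact (Submodule.span_le (p := F.restrictScalars K)).mpr h3 h2
  -- the candidate K-basis of ℳ N
  set fam : bs → M := fun i => (MvPolynomial.monomial (N - a i) (1 : K)) • m i with hfamdef
  have hspanKN : ℳ N = Submodule.span K (Set.range fam) := by
    apply le_antisymm
    · intro z hz
      have h1 : z ∈ Submodule.span S (Set.range m) := hFdef ▸ hMF z hz
      have h2 := spanBound bs inferInstance m a ham z h1 N
      rw [hproj_same N z hz] at h2
      refine Submodule.span_mono ?_ h2
      rintro y ⟨i, v, hv, rfl⟩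
      refine ⟨i, ?_⟩
      rw [hfamdef, eq_tsub_of_add_eq hv]
    · rw [Submodule.span_le]
      rintro y ⟨i, rfl⟩
      have := hMgr (N - a i) (a i) (1 : K) (m i) (ham i)
      rwa [tsub_add_cancel_of_le (haiN i)] at this
  have hind : LinearIndependent K fam := by
    rw [Fintype.linearIndependent_iff]
    intro cfun hsum i
    have h1 : ∑ i : bs, (MvPolynomial.monomial (N - a i) (cfun i) : S) • m i = 0 := by
      rw [← hsum]
      apply Finset.sum_congr rfl
      intro i _
      rw [hfamdef]
      rw [← smul_assoc, MvPolynomial.smul_monomial, smul_eq_mul, mul_one]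
    have h2 : ∑ i : bs, (algebraMap S Q) (MvPolynomial.monomial (N - a i) (cfun i))
        • (i : TensorProduct S Q M) = 0 := by
      calc ∑ i : bs, (algebraMap S Q) (MvPolynomial.monomial (N - a i) (cfun i))
            • (i : TensorProduct S Q M)
          = ∑ i : bs, φ ((MvPolynomial.monomial (N - a i) (cfun i) : S) • m i) := by
            apply Finset.sum_congr rfl
            intro i _
            rw [hφsmul, hφm]
        _ = φ (∑ i : bs, (MvPolynomial.monomial (N - a i) (cfun i) : S) • m i) := (map_sum φ _ _).symm
        _ = 0 := by rw [h1, map_zero]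
    have h3 := Fintype.linearIndependent_iff.mp hbind
      (fun i => (algebraMap S Q) (MvPolynomial.monomial (N - a i) (cfun i))) h2 i
    have h4 : (MvPolynomial.monomial (N - a i) (cfun i) : S) = 0 :=
      (map_eq_zero_iff _ (IsFractionRing.injective S Q)).mp h3
    exact (MvPolynomial.monomial_eq_zero).mp h4
  rw [hcard]
  rw [show Module.finrank K (ℳ N) = Module.finrank K (Submodule.span K (Set.range fam)) by rw [hspanKN]]
  exact finrank_span_eq_card hind

end

theorem statement4 (K : Type) [Field K] (r : ℕ)
    (M : Type) [AddCommGroup M] [Module (MvPolynomial (Fin r) K) M]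
    [Module K M] [IsScalarTower K (MvPolynomial (Fin r) K) M]
    [Module.Finite (MvPolynomial (Fin r) K) M]
    (ℳ : (Fin r →₀ ℕ) → Submodule K M)
    (hM : DirectSum.IsInternal ℳ)
    (hMgr : ∀ (u v : Fin r →₀ ℕ) (c : K) (m : M), m ∈ ℳ v →
      (MvPolynomial.monomial u c) • m ∈ ℳ (u + v))
    -- `HS` is the multigraded Hilbert series of `M`
    (HS : MvPowerSeries (Fin r) ℤ)
    (hHS : ∀ u : Fin r →₀ ℕ, MvPowerSeries.coeff u HS = (Module.finrank K (ℳ u) : ℤ))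
    (P : MvPolynomial (Fin r) ℤ)
    (hP : (∏ i : Fin r, (1 - MvPowerSeries.X i)) * HS = ↑P) :
    (rk (MvPolynomial (Fin r) K) M : ℤ) = MvPolynomial.eval (fun _ => (1 : ℤ)) P := by
  classical
  obtain ⟨N₀, hN₀⟩ := finrank_component_eq_rk K r M ℳ hM hMgr
  set N : Fin r →₀ ℕ := N₀ + ∑ u ∈ P.support, u with hNdef
  have h1 : ∀ u ∈ P.support, u ≤ N := by
    intro u hu
    calc u ≤ ∑ u' ∈ P.support, u' :=
          Finset.single_le_sum (f := fun u' => u') (fun _ _ => zero_le) hu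
      _ ≤ N := le_add_self
  have h2 := coeff_HS_eq_eval_one r HS P hP N h1
  rw [hHS N] at h2
  have h3 : N₀ ≤ N := le_self_add
  rw [← hN₀ N h3]
  exact h2
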